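/- arXiv:2402.04295 — 3 statements merged into one kernel-verified Lean document; each statement's English description precedes it below -/
import Mathlib

section
/- Let v = (a_0, …, a_{r−1}) ∈ 𝕃^r be the vector of values (f(α^0), …, f(α^{r−1})) of a nonzero polynomial f ∈ 𝕃[Y]/⟨Y^r−1⟩ at the powers of a primitive r-th root of unity α, where 𝕃 is a field of characteristic coprime to r. If v has a cyclic run of δ − 1 consecutive zeros (i.e., there exists b with a_{b} = a_{b+1} = ⋯ = a_{b+δ−2} = 0, indices mod r), then f has Hamming weight at least δ (the BCH bound). -/
theorem stmt14 (r : ℕ) {L : Type*} [Field L] (α : L) (hα : IsPrimitiveRoot α r)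
    (f : Polynomial L) (hf : f ≠ 0) (hdeg : f.natDegree < r)
    (b δ : ℕ) (hrun : ∀ t : ℕ, t < δ - 1 → Polynomial.eval (α ^ (b + t)) f = 0) :
    δ ≤ f.support.card := by
  by_contra hlt
  push_neg at hlt
  set w := f.support.card with hw
  have hw1 : 0 < w := Finset.card_pos.mpr (Polynomial.support_nonempty.mpr hf)
  -- enumerate the support
  let e := f.support.orderIsoOfFin (rfl : f.support.card = w)
  have hmem : ∀ i : Fin w, (e i : ℕ) ∈ f.support := fun i => (e i).2
  have hltr : ∀ i : Fin w, (e i : ℕ) < r := fun i =>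
    lt_of_le_of_lt (Polynomial.le_natDegree_of_mem_supp _ (hmem i)) hdeg
  set x : Fin w → L := fun i => α ^ (e i : ℕ) with hx
  have hxinj : Function.Injective x := by
    intro i j hij
    have := hα.pow_inj (hltr i) (hltr j) hij
    exact e.injective (Subtype.ext this)
  set M : Matrix (Fin w) (Fin w) L := fun t i => x i ^ (b + (t : ℕ)) with hM
  set c : Fin w → L := fun i => f.coeff (e i) with hc
  have hmul : M.mulVec c = 0 := by
    funext t
    have ht : (t : ℕ) < δ - 1 := by have := t.2; omega
    have heval := hrun t ht
    rw [Polynomial.eval_eq_sum, Polynomial.sum] at heval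
    have hsum : ∑ n ∈ f.support, f.coeff n * (α ^ (b + (t : ℕ))) ^ n
        = ∑ i : Fin w, f.coeff (e i) * (α ^ (b + (t : ℕ))) ^ (e i : ℕ) := by
      rw [← Finset.sum_attach f.support (fun n => f.coeff n * (α ^ (b + (t : ℕ))) ^ n)]
      exact (Fintype.sum_equiv e.toEquiv _ _ (fun i => rfl)).symm
    simp only [Matrix.mulVec, dotProduct, Pi.zero_apply]
    rw [hsum] at heval
    rw [← heval]
    apply Finset.sum_congr rfl
    intro i _
    simp only [hM, hc, hx]
    rw [← pow_mul, ← pow_mul, mul_comm ((e i : ℕ)) (b + (t : ℕ))]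
    ring
  have hr : 0 < r := (Nat.zero_le _).trans_lt (hltr ⟨0, hw1⟩)
  have hα0 : α ≠ 0 := hα.ne_zero hr.ne'
  have hdet : M.det ≠ 0 := by
    have hMT : M = (Matrix.diagonal (fun i => x i ^ b) * Matrix.vandermonde x).transpose := by
      funext t i
      rw [Matrix.transpose_apply, Matrix.mul_apply]
      rw [Finset.sum_eq_single i]
      · simp [hM, Matrix.vandermonde, pow_add]
      · intro j _ hj
        simp [Matrix.diagonal_apply_ne' _ hj]
      · simp
    rw [hMT, Matrix.det_transpose, Matrix.det_mul, Matrix.det_diagonal,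
      Matrix.det_vandermonde]
    apply mul_ne_zero
    · exact Finset.prod_ne_zero_iff.mpr fun i _ =>
        pow_ne_zero _ (pow_ne_zero _ hα0)
    · refine Finset.prod_ne_zero_iff.mpr fun i _ =>
        Finset.prod_ne_zero_iff.mpr fun j hj => sub_ne_zero.mpr fun h => ?_
      exact absurd (hxinj h) (Finset.mem_Ioi.mp hj).ne'
  have hc0 : c = 0 := Matrix.eq_zero_of_mulVec_eq_zero hdet hmul
  have : c ⟨0, hw1⟩ ≠ 0 := Polynomial.mem_support_iff.mp (hmem ⟨0, hw1⟩)
  rw [hc0] at this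
  exact this rfl
end

section
/- Let q be a prime power, n and r positive integers coprime to q, α₂ a primitive r-th root of unity, and C the cyclic code of length r over 𝔽_q with defining set D ⊆ ℤ/r. Suppose D contains δ − 1 consecutive residues b, b+1, …, b+δ−2 (mod r). Then the abelian code C_n in 𝔽_q[X,Y]/⟨X^n−1, Y^r−1⟩ with defining set ℤ/n × D has minimum distance at least δ: every nonzero g ∈ C_n has Hamming weight ≥ δ. -/
open Polynomial

lemma bch_bound {L : Type*} [Field L] {r : ℕ} {α : L} (hα : IsPrimitiveRoot α r)
    (f : L[X]) (hf : f ≠ 0) (hdeg : f.natDegree < r) (b δ : ℕ)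
    (hz : ∀ t, t < δ - 1 → f.eval (α ^ (b + t)) = 0) : δ ≤ f.support.card := by
  classical
  by_contra hlt
  push_neg at hlt
  have hr : 0 < r := lt_of_le_of_lt (Nat.zero_le _) hdeg
  have hα0 : α ≠ 0 := hα.ne_zero hr.ne'
  have hcard1 : 1 ≤ f.support.card := Finset.card_pos.2 (nonempty_support_iff.2 hf)
  rcases Nat.lt_or_ge δ 2 with h2 | h2
  · omega
  obtain ⟨e0, he0⟩ := (nonempty_support_iff.2 hf)
  set S := f.support with hS
  -- exponents in support are < r
  have hlt_r : ∀ e ∈ S, e < r := fun e he =>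
    lt_of_le_of_lt (le_natDegree_of_mem_supp e he) hdeg
  set Q : L[X] := ∏ e ∈ S.erase e0, (X - C (α ^ e)) with hQ
  have hQdeg : Q.natDegree = (S.erase e0).card := by
    rw [hQ, natDegree_prod _ _ fun e _ => X_sub_C_ne_zero (α ^ e)]
    simp only [natDegree_X_sub_C, Finset.sum_const, smul_eq_mul, mul_one]
  have hQdeg' : Q.natDegree < δ - 1 := by
    rw [hQdeg, Finset.card_erase_of_mem he0]; omega
  -- key identity
  have key : ∑ e ∈ S, f.coeff e * α ^ (e * b) * Q.eval (α ^ e)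
      = ∑ t ∈ Q.support, Q.coeff t * f.eval (α ^ (b + t)) := by
    have hQe : ∀ x : L, Q.eval x = ∑ t ∈ Q.support, Q.coeff t * x ^ t := by
      intro x; rw [eval_eq_sum]; rfl
    have hfe : ∀ t : ℕ, f.eval (α ^ (b + t)) = ∑ e ∈ S, f.coeff e * α ^ (e * (b + t)) := by
      intro t
      rw [eval_eq_sum, Polynomial.sum]
      refine Finset.sum_congr rfl fun e he => ?_
      rw [← pow_mul, mul_comm (b + t) e]
    simp_rw [hQe, hfe, Finset.mul_sum, Finset.sum_comm (s := S)]
    refine Finset.sum_congr rfl fun t ht => Finset.sum_congr rfl fun e he => ?_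
    simp only [mul_add, pow_add, pow_mul]
    ring
  have hRHS : ∑ t ∈ Q.support, Q.coeff t * f.eval (α ^ (b + t)) = 0 := by
    refine Finset.sum_eq_zero fun t ht => ?_
    rw [hz t (lt_of_le_of_lt (le_natDegree_of_mem_supp t ht) hQdeg'), mul_zero]
  have hLHS : ∑ e ∈ S, f.coeff e * α ^ (e * b) * Q.eval (α ^ e)
      = f.coeff e0 * α ^ (e0 * b) * Q.eval (α ^ e0) := by
    refine Finset.sum_eq_single_of_mem e0 he0 fun e he hne => ?_
    have : Q.eval (α ^ e) = 0 := by
      rw [hQ, eval_prod]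
      exact Finset.prod_eq_zero (Finset.mem_erase.2 ⟨hne, he⟩) (by simp)
    rw [this, mul_zero]
  have hQe0 : Q.eval (α ^ e0) ≠ 0 := by
    rw [hQ, eval_prod]
    refine Finset.prod_ne_zero_iff.2 fun e he => ?_
    simp only [eval_sub, eval_X, eval_C, sub_ne_zero]
    intro hcontra
    exact (Finset.mem_erase.1 he).1
      (hα.pow_inj (hlt_r e (Finset.mem_of_mem_erase he)) (hlt_r e0 he0) hcontra.symm)
  rw [hRHS, hLHS] at key
  exact (mul_ne_zero (mul_ne_zero (mem_support_iff.1 he0) (pow_ne_zero _ hα0)) hQe0) key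

/-- The cyclic code of length `r` over `F` with defining set `D` (codewords are
polynomial representatives of degree `< r`). -/
def cycCode (F : Type*) {L : Type*} [Field F] [Field L] [Algebra F L]
    (r : ℕ) (α₂ : L) (D : Set (ZMod r)) : Set (Polynomial F) :=
  {f | f.natDegree < r ∧ ∀ b ∈ D, Polynomial.aeval (α₂ ^ b.val) f = 0}

/-- The abelian code in `F[X,Y]/⟨X^n-1, Y^r-1⟩` with defining set `ℤ/n × D`
(codewords are representatives with exponents `< n` and `< r`). -/
def abCode (F : Type*) {L : Type*} [Field F] [Field L] [Algebra F L]
    (n r : ℕ) (α₁ α₂ : L) (D : Set (ZMod r)) : Set (MvPolynomial (Fin 2) F) :=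
  {g | (∀ m ∈ g.support, m 0 < n ∧ m 1 < r) ∧
    ∀ a : ZMod n, ∀ b ∈ D, MvPolynomial.aeval ![α₁ ^ a.val, α₂ ^ b.val] g = 0}

theorem stmt17 (q n r : ℕ) {F L : Type*} [Field F] [Fintype F] [Field L] [Algebra F L]
    (hq : Fintype.card F = q) (hn : 0 < n) (hr : 0 < r) (hgcd : Nat.Coprime q (n * r))
    (α₁ α₂ : L) (hα₁ : IsPrimitiveRoot α₁ n) (hα₂ : IsPrimitiveRoot α₂ r)
    (D : Set (ZMod r)) (b δ : ℕ)
    (hD : ∀ t : ℕ, t < δ - 1 → (((b + t : ℕ) : ZMod r)) ∈ D) :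
    ∀ g ∈ abCode F n r α₁ α₂ D, g ≠ 0 → δ ≤ g.support.card := by
  classical
  rintro g ⟨hsup, hzero⟩ hgne
  haveI : NeZero n := ⟨hn.ne'⟩
  haveI : NeZero r := ⟨hr.ne'⟩
  have halg : Function.Injective (algebraMap F L) := (algebraMap F L).injective
  obtain ⟨m0, hm0⟩ : g.support.Nonempty := by
    rwa [Finset.nonempty_iff_ne_empty, ne_eq, MvPolynomial.support_eq_empty]
  -- the polynomial in X collecting coefficients with Y-exponent m0 1
  set T : Finset (Fin 2 →₀ ℕ) := g.support.filter (fun m => m 1 = m0 1) with hT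
  have hTmem : ∀ m, m ∈ T ↔ m ∈ g.support ∧ m 1 = m0 1 := fun m => Finset.mem_filter
  clear_value T
  set h : L[X] := ∑ m ∈ T, C (algebraMap F L (g.coeff m)) * X ^ (m 0) with hh
  clear_value h
  have hcoeffh : ∀ k : ℕ, h.coeff k
      = ∑ m ∈ T.filter (fun m => m 0 = k), algebraMap F L (g.coeff m) := by
    intro k
    rw [hh, finset_sum_coeff, Finset.sum_filter]
    refine Finset.sum_congr rfl fun m hm => ?_
    rw [coeff_C_mul, coeff_X_pow]
    by_cases hmk : m 0 = k
    · simp [hmk]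
    · simp [hmk, Ne.symm hmk]
  have hmext : ∀ m ∈ T, m 0 = m0 0 → m = m0 := by
    intro m hm hm0'
    have h1 : m 1 = m0 1 := ((hTmem m).1 hm).2
    ext i
    fin_cases i
    · exact hm0'
    · exact h1
  have hh0 : h.coeff (m0 0) ≠ 0 := by
    rw [hcoeffh]
    have : T.filter (fun m => m 0 = m0 0) = {m0} := by
      apply Finset.eq_singleton_iff_unique_mem.2
      constructor
      · exact Finset.mem_filter.2 ⟨(hTmem m0).2 ⟨hm0, rfl⟩, rfl⟩
      · intro m hm
        exact hmext m (Finset.mem_filter.1 hm).1 (Finset.mem_filter.1 hm).2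
    rw [this, Finset.sum_singleton]
    simpa using fun hc => (MvPolynomial.mem_support_iff.1 hm0) (halg.eq_iff' (map_zero _) |>.1 hc)
  have hhne : h ≠ 0 := fun hc => hh0 (by rw [hc, coeff_zero])
  have hhdeg : h.natDegree < n := by
    have : h.natDegree ≤ n - 1 := by
      rw [hh]
      refine natDegree_sum_le_of_forall_le _ _ fun m hm => ?_
      refine (natDegree_C_mul_le _ _).trans ?_
      rw [natDegree_X_pow]
      have := (hsup m ((hTmem m).1 hm).1).1
      omega
    omega
  -- some evaluation of h at a power of α₁ is nonzero
  have hex : ∃ a : ℕ, h.eval (α₁ ^ a) ≠ 0 := by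
    by_contra hc
    push_neg at hc
    refine hhne (eq_zero_of_natDegree_lt_card_of_eval_eq_zero' h
      ((Finset.range n).image (fun a => α₁ ^ a)) ?_ ?_)
    · rintro x hx
      obtain ⟨a, -, rfl⟩ := Finset.mem_image.1 hx
      exact hc a
    · rw [Finset.card_image_of_injOn, Finset.card_range]
      · exact hhdeg
      · intro x hx y hy hxy
        exact hα₁.pow_inj (Finset.mem_range.1 hx) (Finset.mem_range.1 hy) hxy
  obtain ⟨a, ha⟩ := hex
  -- the Y-slice at X = α₁ ^ a
  set fa : L[X] := ∑ m ∈ g.support,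
      C (algebraMap F L (g.coeff m) * α₁ ^ (a * m 0)) * X ^ (m 1) with hfa
  clear_value fa
  have hcoefffa : ∀ j : ℕ, fa.coeff j = ∑ m ∈ g.support.filter (fun m => m 1 = j),
      algebraMap F L (g.coeff m) * α₁ ^ (a * m 0) := by
    intro j
    rw [hfa, finset_sum_coeff, Finset.sum_filter]
    refine Finset.sum_congr rfl fun m hm => ?_
    rw [coeff_C_mul, coeff_X_pow]
    by_cases hmj : m 1 = j
    · simp [hmj]
    · simp [hmj, Ne.symm hmj]
  have hfane : fa ≠ 0 := by
    intro hc
    apply ha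
    have : fa.coeff (m0 1) = h.eval (α₁ ^ a) := by
      rw [hcoefffa, hh, hT, eval_finset_sum]
      refine Finset.sum_congr rfl fun m hm => ?_
      rw [eval_mul, eval_C, eval_pow, eval_X, ← pow_mul]
    rw [← this, hc, coeff_zero]
  have hfadeg : fa.natDegree < r := by
    have : fa.natDegree ≤ r - 1 := by
      rw [hfa]
      refine natDegree_sum_le_of_forall_le _ _ fun m hm => ?_
      refine (natDegree_C_mul_le _ _).trans ?_
      rw [natDegree_X_pow]
      have := (hsup m hm).2
      omega
    omega
  -- the slice vanishes on the consecutive roots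
  have hfaz : ∀ t, t < δ - 1 → fa.eval (α₂ ^ (b + t)) = 0 := by
    intro t ht
    have h1 : α₁ ^ ((a : ZMod n)).val = α₁ ^ a := by
      rw [ZMod.val_natCast, ← pow_eq_pow_mod a hα₁.pow_eq_one]
    have h2 : α₂ ^ (((b + t : ℕ) : ZMod r)).val = α₂ ^ (b + t) := by
      rw [ZMod.val_natCast, ← pow_eq_pow_mod _ hα₂.pow_eq_one]
    have := hzero (a : ZMod n) _ (hD t ht)
    rw [MvPolynomial.aeval_def, MvPolynomial.eval₂_eq', h1] at this
    rw [← this]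
    rw [hfa, eval_finset_sum]
    rw [h2]
    refine Finset.sum_congr rfl fun m hm => ?_
    rw [eval_mul, eval_C, eval_pow, eval_X, Fin.prod_univ_two]
    simp only [Matrix.cons_val_zero, Matrix.cons_val_one, Matrix.head_cons]
    rw [← pow_mul, mul_comm a (m 0)]
    ring
  have hbch := bch_bound hα₂ fa hfane hfadeg b δ hfaz
  refine hbch.trans ?_
  calc fa.support.card ≤ (g.support.image (fun m => m 1)).card := by
        refine Finset.card_le_card fun j hj => ?_
        rw [mem_support_iff, hcoefffa] at hj
        obtain ⟨m, hm, -⟩ := Finset.exists_ne_zero_of_sum_ne_zero hj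
        exact Finset.mem_image.2 ⟨m, (Finset.mem_filter.1 hm).1, (Finset.mem_filter.1 hm).2⟩
    _ ≤ g.support.card := Finset.card_image_le
end

section
/- Let q be a prime power and r, n positive integers with gcd(q, nr) = 1, and suppose C is a cyclic code of length r over 𝔽_q whose defining set D contains exactly the consecutive residues b, …, b+δ−2 (mod r) with d(C) = δ (e.g., a Reed–Solomon code with r = q−1). Then the abelian code C_n with defining set ℤ/n × D satisfies d(C_n) = δ and dim C_n = n(r − δ + 1). In particular, if n ≥ 2 and δ ≥ 2, C_n is not MDS: d(C_n) < nr − dim C_n + 1. -/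
namespace Aux18

variable {F L : Type*} [Field F] [Field L] [Algebra F L]

noncomputable def mk2 (i j : ℕ) : Fin 2 →₀ ℕ := Finsupp.single 0 i + Finsupp.single 1 j

@[simp] lemma mk2_apply0 (i j : ℕ) : mk2 i j 0 = i := by simp [mk2]
@[simp] lemma mk2_apply1 (i j : ℕ) : mk2 i j 1 = j := by simp [mk2]

lemma fin2_eq_iff (m m' : Fin 2 →₀ ℕ) : m = m' ↔ m 0 = m' 0 ∧ m 1 = m' 1 := by
  constructor
  · rintro rfl; exact ⟨rfl, rfl⟩
  · rintro ⟨h0, h1⟩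
    ext a
    refine Fin.cases h0 (fun a => ?_) a
    have : a = 0 := Subsingleton.elim _ _
    subst this; exact h1

lemma mk2_eta (m : Fin 2 →₀ ℕ) : mk2 (m 0) (m 1) = m := by
  rw [fin2_eq_iff]; simp

noncomputable def embY : Polynomial F →ₐ[F] MvPolynomial (Fin 2) F :=
  Polynomial.aeval (MvPolynomial.X 1)

lemma embY_monomial (j : ℕ) (c : F) :
    embY (Polynomial.monomial j c) = MvPolynomial.monomial (Finsupp.single 1 j) c := by
  rw [embY, Polynomial.aeval_monomial, ← MvPolynomial.C_mul_X_pow_eq_monomial]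
  rfl

lemma coeff_X0pow_mul_embY (i : ℕ) (p : Polynomial F) (m : Fin 2 →₀ ℕ) :
    MvPolynomial.coeff m ((MvPolynomial.X 0) ^ i * embY p) =
      if m 0 = i then p.coeff (m 1) else 0 := by
  induction p using Polynomial.induction_on' with
  | add f g hf hg =>
      simp only [map_add, mul_add, MvPolynomial.coeff_add, hf, hg, Polynomial.coeff_add]
      split_ifs <;> simp
  | monomial j c =>
      rw [embY_monomial, MvPolynomial.X_pow_eq_monomial, MvPolynomial.monomial_mul,
        MvPolynomial.coeff_monomial, one_mul]
      have hmk : (Finsupp.single (0 : Fin 2) i + Finsupp.single 1 j) = mk2 i j := rfl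
      rw [hmk, Polynomial.coeff_monomial]
      by_cases h0 : m 0 = i
      · by_cases h1 : j = m 1
        · have hm : mk2 i j = m := by rw [fin2_eq_iff]; simp [h0, h1]
          rw [if_pos hm, if_pos h0, if_pos h1]
        · have : ¬ (mk2 i j = m) := by rw [fin2_eq_iff]; simp; intro; omega
          simp [this, h0, h1]
      · have : ¬ (mk2 i j = m) := by
          rw [fin2_eq_iff]; simp; intro h; exact absurd h.symm h0
        simp [this, h0]

lemma coeff_embY (p : Polynomial F) (m : Fin 2 →₀ ℕ) :
    MvPolynomial.coeff m (embY p) = if m 0 = 0 then p.coeff (m 1) else 0 := by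
  have := coeff_X0pow_mul_embY (F := F) 0 p m
  simpa using this

noncomputable def Emap (n : ℕ) : (Fin n → Polynomial F) →ₗ[F] MvPolynomial (Fin 2) F :=
  ∑ i : Fin n, (LinearMap.mulLeft F ((MvPolynomial.X 0 : MvPolynomial (Fin 2) F) ^ (i : ℕ))).comp
    (embY.toLinearMap.comp (LinearMap.proj i))

lemma Emap_apply (n : ℕ) (f : Fin n → Polynomial F) :
    Emap n f = ∑ i : Fin n, (MvPolynomial.X 0) ^ (i : ℕ) * embY (f i) := by
  simp [Emap, LinearMap.sum_apply, LinearMap.mulLeft_apply]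

lemma aeval_embY (v : Fin 2 → L) (p : Polynomial F) :
    MvPolynomial.aeval v (embY p) = Polynomial.aeval (v 1) p := by
  have h := Polynomial.aeval_algHom_apply (MvPolynomial.aeval v) (MvPolynomial.X 1) p
  rw [MvPolynomial.aeval_X] at h
  exact h.symm

lemma aeval_Emap (n : ℕ) (f : Fin n → Polynomial F) (x y : L) :
    MvPolynomial.aeval ![x, y] (Emap n f) = ∑ i : Fin n, x ^ (i : ℕ) * Polynomial.aeval y (f i) := by
  rw [Emap_apply, map_sum]
  refine Finset.sum_congr rfl fun i _ => ?_
  rw [map_mul, map_pow, MvPolynomial.aeval_X]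
  rw [aeval_embY]
  simp

lemma coeff_Emap (n : ℕ) (f : Fin n → Polynomial F) (m : Fin 2 →₀ ℕ) :
    MvPolynomial.coeff m (Emap n f) =
      if h : m 0 < n then (f ⟨m 0, h⟩).coeff (m 1) else 0 := by
  rw [Emap_apply, MvPolynomial.coeff_sum]
  simp only [coeff_X0pow_mul_embY]
  by_cases h : m 0 < n
  · rw [dif_pos h]
    rw [Finset.sum_eq_single (⟨m 0, h⟩ : Fin n)]
    · rw [if_pos rfl]
    · intro i _ hi
      rw [if_neg]
      intro hEq
      exact hi (by ext; simp [hEq.symm])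
    · intro habs; exact absurd (Finset.mem_univ _) habs
  · rw [dif_neg h]
    apply Finset.sum_eq_zero
    intro i _
    rw [if_neg]
    intro hEq
    exact h (hEq ▸ i.isLt)

lemma Emap_injective (n : ℕ) : Function.Injective (Emap (F := F) n) := by
  intro f f' hff
  funext i
  ext j
  have := congrArg (MvPolynomial.coeff (mk2 (i : ℕ) j)) hff
  rw [coeff_Emap, coeff_Emap] at this
  rw [dif_pos (by simpa using i.isLt), dif_pos (by simpa using i.isLt)] at this
  simpa using this

noncomputable def decomp (r : ℕ) (g : MvPolynomial (Fin 2) F) (i : ℕ) : Polynomial F :=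
  ∑ j ∈ Finset.range r, Polynomial.monomial j (MvPolynomial.coeff (mk2 i j) g)

lemma coeff_decomp (r : ℕ) (g : MvPolynomial (Fin 2) F) (i j : ℕ) :
    (decomp r g i).coeff j = if j < r then MvPolynomial.coeff (mk2 i j) g else 0 := by
  rw [decomp, Polynomial.finset_sum_coeff]
  simp only [Polynomial.coeff_monomial]
  rw [Finset.sum_ite_eq' (Finset.range r)]
  simp

lemma degree_decomp (r : ℕ) (g : MvPolynomial (Fin 2) F) (i : ℕ) :
    (decomp r g i).degree < (r : WithBot ℕ) := by
  rcases Nat.eq_zero_or_pos r with h | h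
  · simp [h, decomp]
  rw [Polynomial.degree_lt_iff_coeff_zero]
  intro m hm
  rw [coeff_decomp]
  simp [Nat.not_lt.2 hm]

lemma natDegree_decomp (r : ℕ) (hr : 0 < r) (g : MvPolynomial (Fin 2) F) (i : ℕ) :
    (decomp r g i).natDegree < r := by
  by_cases h : decomp r g i = 0
  · simp [h, hr]
  · exact (Polynomial.natDegree_lt_iff_degree_lt h).2 (degree_decomp r g i)

lemma Emap_decomp {n r : ℕ} {g : MvPolynomial (Fin 2) F}
    (hg : ∀ m ∈ g.support, m 0 < n ∧ m 1 < r) :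
    Emap n (fun i : Fin n => decomp r g (i : ℕ)) = g := by
  apply MvPolynomial.ext
  intro m
  rw [coeff_Emap]
  by_cases h0 : m 0 < n
  · rw [dif_pos h0, coeff_decomp]
    by_cases h1 : m 1 < r
    · rw [if_pos h1, mk2_eta]
    · rw [if_neg h1]
      by_contra hc
      have : m ∈ g.support := MvPolynomial.mem_support_iff.2 fun hc0 => hc hc0.symm
      exact h1 (hg m this).2
  · rw [dif_neg h0]
    by_contra hc
    have : m ∈ g.support := MvPolynomial.mem_support_iff.2 fun hc0 => hc hc0.symm
    exact h0 (hg m this).1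

/-- A polynomial of degree `< n` vanishing on all powers of a primitive `n`-th root is 0. -/
lemma eq_zero_of_primroot_vanish {α : L} {n : ℕ} (hα : IsPrimitiveRoot α n)
    (P : Polynomial L) (hdeg : P.degree < (n : WithBot ℕ)) (hroots : ∀ t < n, P.eval (α ^ t) = 0) :
    P = 0 := by
  classical
  by_contra hP
  have hnd : P.natDegree < n := (Polynomial.natDegree_lt_iff_degree_lt hP).2 hdeg
  set T : Finset L := (Finset.range n).image (α ^ ·) with hT
  have hcardT : T.card = n := by
    rw [hT, Finset.card_image_of_injOn, Finset.card_range]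
    intro a ha b hb hab
    exact hα.pow_inj (Finset.mem_range.1 ha) (Finset.mem_range.1 hb) hab
  have hsub : T ⊆ P.roots.toFinset := by
    intro x hx
    rw [hT, Finset.mem_image] at hx
    obtain ⟨t, ht, rfl⟩ := hx
    rw [Multiset.mem_toFinset, Polynomial.mem_roots hP]
    exact hroots t (Finset.mem_range.1 ht)
  have : n ≤ P.natDegree := by
    calc n = T.card := hcardT.symm
    _ ≤ P.roots.toFinset.card := Finset.card_le_card hsub
    _ ≤ Multiset.card P.roots := P.roots.toFinset_card_le
    _ ≤ P.natDegree := P.card_roots'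
  omega

/-- The `F`-submodule version of `cycCode` (with `degree` instead of `natDegree`). -/
noncomputable def Ccyc (F : Type*) {L : Type*} [Field F] [Field L] [Algebra F L]
    (r : ℕ) (α₂ : L) (D : Set (ZMod r)) : Submodule F (Polynomial F) where
  carrier := {f | f.degree < (r : WithBot ℕ) ∧ ∀ b ∈ D, Polynomial.aeval (α₂ ^ b.val) f = 0}
  add_mem' := by
    rintro f g ⟨hf1, hf2⟩ ⟨hg1, hg2⟩
    refine ⟨lt_of_le_of_lt (Polynomial.degree_add_le f g) (max_lt hf1 hg1), fun b hb => ?_⟩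
    rw [map_add, hf2 b hb, hg2 b hb, add_zero]
  zero_mem' := ⟨by rw [Polynomial.degree_zero]; exact WithBot.bot_lt_coe r, by simp⟩
  smul_mem' := by
    rintro c f ⟨hf1, hf2⟩
    refine ⟨lt_of_le_of_lt (Polynomial.degree_smul_le c f) hf1, fun b hb => ?_⟩
    rw [map_smul, hf2 b hb, smul_zero]

lemma mem_Ccyc {r : ℕ} {α₂ : L} {D : Set (ZMod r)} {f : Polynomial F} :
    f ∈ Ccyc F r α₂ D ↔
      f.degree < (r : WithBot ℕ) ∧ ∀ b ∈ D, Polynomial.aeval (α₂ ^ b.val) f = 0 :=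
  Iff.rfl

open Polynomial in
lemma equiv_Ccyc (r δ : ℕ) (hδ : 2 ≤ δ) (hδr : δ ≤ r) (α₂ : L) (D : Set (ZMod r))
    (h : Polynomial F) (hmonic : h.Monic) (hhdeg : h.natDegree = δ - 1)
    (hchar : ∀ f : Polynomial F, ((∀ b' ∈ D, Polynomial.aeval (α₂ ^ b'.val) f = 0) ↔ h ∣ f)) :
    Nonempty ((Polynomial.degreeLT F (r - (δ - 1))) ≃ₗ[F] Ccyc F r α₂ D) := by
  classical
  set k : ℕ := r - (δ - 1) with hk
  have hk0 : 0 < k := by omega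
  have hne : h ≠ 0 := hmonic.ne_zero
  have hmem : ∀ s : Polynomial F, s ∈ Polynomial.degreeLT F k → h * s ∈ Ccyc F r α₂ D := by
    intro s hs
    rw [Polynomial.mem_degreeLT] at hs
    refine ⟨?_, (hchar (h * s)).2 ⟨s, rfl⟩⟩
    by_cases h0 : s = 0
    · rw [h0, mul_zero, Polynomial.degree_zero]; exact WithBot.bot_lt_coe r
    have hns : s.natDegree < k := (Polynomial.natDegree_lt_iff_degree_lt h0).2 hs
    have : (h * s).natDegree < r := by
      rw [Polynomial.natDegree_mul hne h0, hhdeg]; omega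
    exact (Polynomial.natDegree_lt_iff_degree_lt (mul_ne_zero hne h0)).1 this
  let Θ : Polynomial.degreeLT F k →ₗ[F] Ccyc F r α₂ D :=
    { toFun := fun s => ⟨h * (s : Polynomial F), hmem s s.2⟩
      map_add' := by intro s t; ext; simp [mul_add]
      map_smul' := by intro c s; ext; simp [mul_smul_comm] }
  have hbij : Function.Bijective Θ := by
    constructor
    · intro s t hst
      have : h * (s : Polynomial F) = h * (t : Polynomial F) := congrArg Subtype.val hst
      exact Subtype.ext (mul_left_cancel₀ hne this)
    · rintro ⟨f, hf⟩
      obtain ⟨hdeg, hvan⟩ := hf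
      obtain ⟨s, rfl⟩ := (hchar f).1 hvan
      have hs : s ∈ Polynomial.degreeLT F k := by
        rw [Polynomial.mem_degreeLT]
        by_cases h0 : s = 0
        · rw [h0, Polynomial.degree_zero]; exact WithBot.bot_lt_coe k
        have hfne : h * s ≠ 0 := mul_ne_zero hne h0
        have hnd : (h * s).natDegree < r := (Polynomial.natDegree_lt_iff_degree_lt hfne).2 hdeg
        rw [Polynomial.natDegree_mul hne h0, hhdeg] at hnd
        exact (Polynomial.natDegree_lt_iff_degree_lt h0).1 (by omega)
      exact ⟨⟨s, hs⟩, rfl⟩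
  exact ⟨LinearEquiv.ofBijective Θ hbij⟩

open Polynomial in
lemma exists_genpoly {F L : Type*} [Field F] [Fintype F] [Field L] [Algebra F L]
    (q r δ : ℕ) (hq : Fintype.card F = q) (hr : 0 < r) (hδ : 2 ≤ δ) (hδr : δ ≤ r)
    (hqr : Nat.Coprime q r) (α₂ : L) (hα₂ : IsPrimitiveRoot α₂ r) (b : ℕ)
    (D : Set (ZMod r)) (hD : D = {x : ZMod r | ∃ t : ℕ, t < δ - 1 ∧ x = ((b + t : ℕ) : ZMod r)})
    (hDq : ∀ x ∈ D, x * (q : ZMod r) ∈ D) :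
    ∃ h : Polynomial F, h.Monic ∧ h.natDegree = δ - 1 ∧
      ∀ f : Polynomial F, ((∀ b' ∈ D, Polynomial.aeval (α₂ ^ b'.val) f = 0) ↔ h ∣ f) := by
  classical
  haveI : NeZero r := ⟨hr.ne'⟩
  set ρ : ZMod r → L := fun x => α₂ ^ x.val with hρ
  have hρinj : Function.Injective ρ := by
    intro x y hxy
    exact ZMod.val_injective r (hα₂.pow_inj (ZMod.val_lt x) (ZMod.val_lt y) hxy)
  set Dfin : Finset (ZMod r) := (Finset.range (δ - 1)).image (fun t => ((b + t : ℕ) : ZMod r))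
    with hDfin
  have hmemD : ∀ x : ZMod r, x ∈ Dfin ↔ x ∈ D := by
    intro x
    simp only [hDfin, Finset.mem_image, Finset.mem_range, hD, Set.mem_setOf_eq]
    constructor
    · rintro ⟨t, ht, rfl⟩; exact ⟨t, ht, rfl⟩
    · rintro ⟨t, ht, rfl⟩; exact ⟨t, ht, rfl⟩
  have hcardD : Dfin.card = δ - 1 := by
    rw [hDfin, Finset.card_image_of_injOn, Finset.card_range]
    intro t ht t' ht' htt
    simp only [Finset.coe_range, Set.mem_Iio] at ht ht'
    rw [ZMod.natCast_eq_natCast_iff] at htt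
    have := Nat.ModEq.add_left_cancel' b htt
    rw [Nat.ModEq] at this
    rw [Nat.mod_eq_of_lt (by omega), Nat.mod_eq_of_lt (by omega)] at this
    exact this
  set g : Polynomial L := ∏ x ∈ Dfin, (X - C (ρ x)) with hg
  have hgmonic : g.Monic := monic_prod_of_monic _ _ (fun _ _ => monic_X_sub_C _)
  have hgdeg : g.natDegree = δ - 1 := by
    rw [hg, natDegree_prod _ _ (fun i _ => X_sub_C_ne_zero _)]
    simp [hcardD]
  set p := ringChar F with hpdef
  haveI : CharP F p := ringChar.charP F
  obtain ⟨k, hp, hcard⟩ := FiniteField.card F p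
  haveI : Fact p.Prime := ⟨hp⟩
  haveI : CharP L p := charP_of_injective_ringHom (algebraMap F L).injective p
  haveI : ExpChar L p := by infer_instance
  set φ : L →+* L := iterateFrobenius L p k with hφdef
  have hφ : ∀ x : L, φ x = x ^ q := by
    intro x; rw [hφdef, iterateFrobenius_def, ← hcard, hq]
  have hqu : IsUnit ((q : ZMod r)) := (ZMod.isUnit_iff_coprime q r).2 hqr
  have heinj : Function.Injective (fun x : ZMod r => x * (q : ZMod r)) := by
    intro x y hxy
    exact hqu.mul_right_cancel hxy
  have himg : Dfin.image (fun x => x * (q : ZMod r)) = Dfin := by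
    apply Finset.eq_of_subset_of_card_le
    · intro y hy
      rw [Finset.mem_image] at hy
      obtain ⟨x, hx, rfl⟩ := hy
      rw [hmemD]
      exact hDq x ((hmemD x).1 hx)
    · rw [Finset.card_image_of_injective _ heinj]
  have hpowmod : ∀ a : ℕ, α₂ ^ a = α₂ ^ (a % r) := by
    intro a
    conv_lhs => rw [← Nat.div_add_mod a r]
    rw [pow_add, pow_mul, hα₂.pow_eq_one, one_pow, one_mul]
  have hρe : ∀ x : ZMod r, φ (ρ x) = ρ (x * (q : ZMod r)) := by
    intro x
    rw [hφ, hρ]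
    simp only [← pow_mul]
    rw [hpowmod (x.val * q), hpowmod ((x * (q : ZMod r)).val)]
    congr 1
    rw [ZMod.val_mul, ZMod.val_natCast, Nat.mod_mod_of_dvd _ dvd_rfl]
    exact (Nat.ModEq.mul_left x.val (Nat.mod_modEq q r)).symm
  have hmapg : g.map φ = g := by
    rw [hg, Polynomial.map_prod]
    simp only [Polynomial.map_sub, Polynomial.map_X, Polynomial.map_C]
    calc (∏ x ∈ Dfin, (X - C (φ (ρ x))))
        = ∏ x ∈ Dfin, (X - C (ρ (x * (q : ZMod r)))) := by
          exact Finset.prod_congr rfl fun x _ => by rw [hρe]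
      _ = ∏ y ∈ Dfin.image (fun x => x * (q : ZMod r)), (X - C (ρ y)) := by
          rw [Finset.prod_image (fun x _ y _ h => heinj h)]
      _ = ∏ x ∈ Dfin, (X - C (ρ x)) := by rw [himg]
  have hfix : ∀ i, (g.coeff i) ^ q = g.coeff i := by
    intro i
    have := congrArg (fun P => Polynomial.coeff P i) hmapg
    simpa [Polynomial.coeff_map, hφ] using this
  have hrange : ∀ c : L, c ^ q = c → c ∈ Set.range (algebraMap F L) := by
    intro c hc
    have hq2 : 2 ≤ q := hq ▸ Fintype.one_lt_card
    set P : Polynomial L := X ^ q - X with hP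
    have hPne : P ≠ 0 := by
      intro h0
      have := congrArg (fun P => Polynomial.coeff P 1) h0
      simp only [hP, Polynomial.coeff_sub, Polynomial.coeff_X_pow, Polynomial.coeff_X_one] at this
      rw [if_neg (by omega)] at this
      simp at this
    have hPdeg : P.natDegree ≤ q := by
      rw [hP]
      refine le_trans (Polynomial.natDegree_sub_le _ _) ?_
      simp [Polynomial.natDegree_X_pow]
      omega
    set S : Finset L := Finset.univ.image (algebraMap F L) with hS
    have hScard : S.card = q := by
      rw [hS, Finset.card_image_of_injective _ (algebraMap F L).injective, Finset.card_univ, hq]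
    have hSsub : S ⊆ P.roots.toFinset := by
      intro x hx
      rw [hS, Finset.mem_image] at hx
      obtain ⟨a, _, rfl⟩ := hx
      rw [Multiset.mem_toFinset, Polynomial.mem_roots hPne]
      simp only [hP, Polynomial.IsRoot.def, Polynomial.eval_sub, Polynomial.eval_pow,
        Polynomial.eval_X]
      rw [← map_pow, ← hq, FiniteField.pow_card, sub_self]
    have hSeq : S = P.roots.toFinset := by
      apply Finset.eq_of_subset_of_card_le hSsub
      calc P.roots.toFinset.card ≤ Multiset.card P.roots := P.roots.toFinset_card_le
        _ ≤ P.natDegree := P.card_roots'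
        _ ≤ q := hPdeg
        _ = S.card := hScard.symm
    have hcP : c ∈ P.roots.toFinset := by
      rw [Multiset.mem_toFinset, Polynomial.mem_roots hPne]
      simp [hP, Polynomial.IsRoot.def, hc]
    rw [← hSeq, hS, Finset.mem_image] at hcP
    obtain ⟨a, _, rfl⟩ := hcP
    exact ⟨a, rfl⟩
  have hlift : g ∈ Polynomial.lifts (algebraMap F L) := by
    rw [Polynomial.lifts_iff_coeff_lifts]
    intro i
    exact hrange _ (hfix i)
  obtain ⟨h, hmaph, _⟩ := Polynomial.mem_lifts_and_degree_eq hlift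
  have hmonic : h.Monic := Polynomial.monic_of_injective (algebraMap F L).injective
    (by rw [hmaph]; exact hgmonic)
  have hhdeg : h.natDegree = δ - 1 := by
    rw [← hgdeg, ← hmaph, Polynomial.natDegree_map_eq_of_injective (algebraMap F L).injective]
  refine ⟨h, hmonic, hhdeg, fun f => ?_⟩
  constructor
  · intro hall
    by_cases hf : f = 0
    · simp [hf]
    rw [← Polynomial.map_dvd_map (algebraMap F L) (algebraMap F L).injective hmonic, hmaph]
    have hfm : f.map (algebraMap F L) ≠ 0 := by
      simpa using (Polynomial.map_ne_zero_iff (algebraMap F L).injective).2 hf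
    set m : Multiset L := Dfin.val.map ρ with hm
    have hmnodup : m.Nodup := Dfin.nodup.map hρinj
    have hmle : m ≤ (f.map (algebraMap F L)).roots := by
      rw [Multiset.le_iff_subset hmnodup]
      intro z hz
      rw [hm, Multiset.mem_map] at hz
      obtain ⟨x, hx, rfl⟩ := hz
      rw [Polynomial.mem_roots hfm, Polynomial.IsRoot.def, Polynomial.eval_map,
        ← Polynomial.aeval_def]
      exact hall x ((hmemD x).1 hx)
    have : g = (m.map (fun a => X - C a)).prod := by
      rw [hg, hm, Multiset.map_map, Finset.prod]
      rfl
    rw [this]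
    exact dvd_trans (Multiset.prod_dvd_prod_of_le (Multiset.map_le_map hmle))
      (Polynomial.prod_multiset_X_sub_C_dvd _)
  · rintro ⟨s, rfl⟩ b' hb'
    rw [map_mul]
    have : Polynomial.aeval (α₂ ^ b'.val) h = 0 := by
      rw [Polynomial.aeval_def, ← Polynomial.eval_map, hmaph, hg, Polynomial.eval_prod]
      refine Finset.prod_eq_zero ((hmemD b').2 hb') ?_
      simp [hρ]
    rw [this, zero_mul]

end Aux18

open Aux18 in
theorem stmt18 (q n r δ : ℕ) {F L : Type*} [Field F] [Fintype F] [Field L] [Algebra F L]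
    (hq : Fintype.card F = q) (hn : 2 ≤ n) (hr : 0 < r) (hδ : 2 ≤ δ) (hδr : δ ≤ r)
    (hgcd : Nat.Coprime q (n * r))
    (α₁ α₂ : L) (hα₁ : IsPrimitiveRoot α₁ n) (hα₂ : IsPrimitiveRoot α₂ r)
    (b : ℕ) (D : Set (ZMod r))
    (hD : D = {x : ZMod r | ∃ t : ℕ, t < δ - 1 ∧ x = ((b + t : ℕ) : ZMod r)})
    (hDq : ∀ x ∈ D, x * (q : ZMod r) ∈ D)
    (hdC : sInf {w : ℕ | ∃ f ∈ cycCode F r α₂ D, f ≠ 0 ∧ w = f.support.card} = δ)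
    (Cn : Submodule F (MvPolynomial (Fin 2) F))
    (hCn : (Cn : Set (MvPolynomial (Fin 2) F)) = abCode F n r α₁ α₂ D) :
    sInf {w : ℕ | ∃ g ∈ abCode F n r α₁ α₂ D, g ≠ 0 ∧ w = g.support.card} = δ ∧
    Module.finrank F Cn = n * (r - δ + 1) ∧
    δ < n * r - Module.finrank F Cn + 1 := by
  classical
  have hn0 : 0 < n := by omega
  haveI : NeZero n := ⟨hn0.ne'⟩
  -- `decomp` of a codeword lies in the cyclic code
  have hdecomp_mem : ∀ g ∈ abCode F n r α₁ α₂ D, ∀ i : Fin n,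
      decomp r g (i : ℕ) ∈ Ccyc F r α₂ D := by
    intro g hg i
    refine ⟨degree_decomp r g (i : ℕ), ?_⟩
    intro bb hbb
    set c : Fin n → L := fun i' => Polynomial.aeval (α₂ ^ bb.val) (decomp r g (i' : ℕ)) with hc
    set P : Polynomial L := ∑ i' : Fin n, Polynomial.monomial (i' : ℕ) (c i') with hP
    have hdegP : P.degree < (n : WithBot ℕ) := by
      rw [hP]
      refine lt_of_le_of_lt (Polynomial.degree_sum_le _ _) ?_
      refine (Finset.sup_lt_iff ?_).2 ?_
      · exact WithBot.bot_lt_coe n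
      intro i' _
      exact lt_of_le_of_lt (Polynomial.degree_monomial_le _ _) (by exact_mod_cast i'.isLt)
    have hEg : Emap n (fun i' : Fin n => decomp r g (i' : ℕ)) = g := Emap_decomp hg.1
    have hevalP : ∀ t < n, P.eval (α₁ ^ t) = 0 := by
      intro t ht
      have hval : ((t : ZMod n)).val = t := by
        rw [ZMod.val_natCast, Nat.mod_eq_of_lt ht]
      have h0 := hg.2 (t : ZMod n) bb hbb
      rw [hval] at h0
      rw [← hEg, aeval_Emap] at h0
      rw [hP]
      rw [Polynomial.eval_finset_sum]
      simp only [Polynomial.eval_monomial]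
      rw [← h0]
      refine Finset.sum_congr rfl fun i' _ => ?_
      rw [hc, mul_comm]
    have hP0 : P = 0 := eq_zero_of_primroot_vanish hα₁ P hdegP hevalP
    have : P.coeff (i : ℕ) = c i := by
      rw [hP, Polynomial.finset_sum_coeff]
      simp only [Polynomial.coeff_monomial]
      rw [Finset.sum_eq_single i]
      · rw [if_pos rfl]
      · intro i' _ hi'
        rw [if_neg]
        intro hEq
        exact hi' (by ext; simp [hEq])
      · intro habs; exact absurd (Finset.mem_univ _) habs
    rw [hP0] at this
    simp only [Polynomial.coeff_zero] at this
    exact this.symm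
  -- membership of `Emap` images in the abelian code
  have hEmap_mem : ∀ f : Fin n → Polynomial F, (∀ i, f i ∈ Ccyc F r α₂ D) →
      Emap n f ∈ abCode F n r α₁ α₂ D := by
    intro f hf
    constructor
    · intro m hm
      rw [MvPolynomial.mem_support_iff, coeff_Emap] at hm
      by_cases h0 : m 0 < n
      · rw [dif_pos h0] at hm
        refine ⟨h0, ?_⟩
        by_contra h1
        have hdeg := (hf ⟨m 0, h0⟩).1
        have : (f ⟨m 0, h0⟩).coeff (m 1) = 0 := by
          apply Polynomial.coeff_eq_zero_of_degree_lt
          exact lt_of_lt_of_le hdeg (by exact_mod_cast Nat.not_lt.1 h1)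
        exact hm this
      · rw [dif_neg h0] at hm; exact absurd rfl hm
    · intro a bb hbb
      rw [aeval_Emap]
      apply Finset.sum_eq_zero
      intro i _
      rw [(hf i).2 bb hbb, mul_zero]
  -- Part 1 : minimum weight
  have hlow : ∀ g ∈ abCode F n r α₁ α₂ D, g ≠ 0 → δ ≤ g.support.card := by
    intro g hg hgne
    set f : Fin n → Polynomial F := fun i => decomp r g (i : ℕ) with hf
    have hEg : Emap n f = g := Emap_decomp hg.1
    have : ∃ i, f i ≠ 0 := by
      by_contra hcon
      push_neg at hcon
      apply hgne
      rw [← hEg]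
      have : f = 0 := funext fun i => hcon i
      rw [this, map_zero]
    obtain ⟨i, hfi⟩ := this
    have hmemcyc : f i ∈ cycCode F r α₂ D :=
      ⟨natDegree_decomp r hr g (i : ℕ), (hdecomp_mem g hg i).2⟩
    have hδle : δ ≤ (f i).support.card := by
      rw [← hdC]
      exact Nat.sInf_le ⟨f i, hmemcyc, hfi, rfl⟩
    refine le_trans hδle ?_
    apply Finset.card_le_card_of_injOn (fun j => mk2 (i : ℕ) j)
    · intro j hj
      rw [Finset.mem_coe, Polynomial.mem_support_iff] at hj
      have hjr : j < r := by
        by_contra hcon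
        rw [hf] at hj
        rw [coeff_decomp, if_neg hcon] at hj
        exact hj rfl
      rw [Finset.mem_coe, MvPolynomial.mem_support_iff]
      have : (f i).coeff j = MvPolynomial.coeff (mk2 (i : ℕ) j) g := by
        rw [hf, coeff_decomp, if_pos hjr]
      rw [← this]
      exact hj
    · intro j _ j' _ hjj
      have := congrArg (fun m : Fin 2 →₀ ℕ => m 1) hjj
      simpa using this
  have hSne : {w : ℕ | ∃ f ∈ cycCode F r α₂ D, f ≠ 0 ∧ w = f.support.card}.Nonempty := by
    by_contra hcon
    rw [Set.not_nonempty_iff_eq_empty] at hcon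
    rw [hcon, Nat.sInf_empty] at hdC
    omega
  have hδmem := Nat.sInf_mem hSne
  rw [hdC] at hδmem
  obtain ⟨f₀, hf₀mem, hf₀ne, hw₀⟩ := hδmem
  have hf₀deg : (f₀ : Polynomial F).degree < (r : WithBot ℕ) :=
    (Polynomial.natDegree_lt_iff_degree_lt hf₀ne).1 hf₀mem.1
  set g₀ : MvPolynomial (Fin 2) F := embY f₀ with hg₀
  have hg₀mem : g₀ ∈ abCode F n r α₁ α₂ D := by
    constructor
    · intro m hm
      rw [MvPolynomial.mem_support_iff, hg₀, coeff_embY] at hm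
      by_cases h0 : m 0 = 0
      · rw [if_pos h0] at hm
        refine ⟨by omega, ?_⟩
        by_contra h1
        exact hm (Polynomial.coeff_eq_zero_of_degree_lt
          (lt_of_lt_of_le hf₀deg (by exact_mod_cast Nat.not_lt.1 h1)))
      · rw [if_neg h0] at hm; exact absurd rfl hm
    · intro a bb hbb
      rw [hg₀, aeval_embY]
      have : (![α₁ ^ a.val, α₂ ^ bb.val] : Fin 2 → L) 1 = α₂ ^ bb.val := rfl
      rw [this]
      exact hf₀mem.2 bb hbb
  have hg₀ne : g₀ ≠ 0 := by
    intro hcon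
    apply hf₀ne
    ext j
    have := congrArg (MvPolynomial.coeff (mk2 0 j)) hcon
    rw [hg₀] at hcon
    have h2 := congrArg (MvPolynomial.coeff (mk2 0 j)) hcon
    rw [coeff_embY] at h2
    simpa using h2
  have hg₀card : g₀.support.card = f₀.support.card := by
    apply Finset.card_bij' (fun m _ => m 1) (fun j _ => mk2 0 j)
    · intro m hm
      rw [MvPolynomial.mem_support_iff, hg₀, coeff_embY] at hm
      by_cases h0 : m 0 = 0
      · rw [if_pos h0] at hm
        exact Polynomial.mem_support_iff.2 hm
      · rw [if_neg h0] at hm; exact absurd rfl hm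
    · intro j hj
      rw [MvPolynomial.mem_support_iff, hg₀, coeff_embY]
      simpa using Polynomial.mem_support_iff.1 hj
    · intro m hm
      rw [MvPolynomial.mem_support_iff, hg₀, coeff_embY] at hm
      have h0 : m 0 = 0 := by
        by_contra h0
        rw [if_neg h0] at hm; exact hm rfl
      rw [← h0]
      exact mk2_eta m
    · intro j _
      simp
  have hpart1 : sInf {w : ℕ | ∃ g ∈ abCode F n r α₁ α₂ D, g ≠ 0 ∧ w = g.support.card} = δ := by
    have hδab : δ ∈ {w : ℕ | ∃ g ∈ abCode F n r α₁ α₂ D, g ≠ 0 ∧ w = g.support.card} :=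
      ⟨g₀, hg₀mem, hg₀ne, by rw [hg₀card, ← hw₀]⟩
    apply le_antisymm (Nat.sInf_le hδab)
    obtain ⟨g', hg'mem, hg'ne, hg'w⟩ := Nat.sInf_mem ⟨δ, hδab⟩
    rw [hg'w]
    exact hlow g' hg'mem hg'ne
  -- Part 2 : dimension
  have hqr : Nat.Coprime q r := Nat.Coprime.coprime_dvd_right (dvd_mul_left r n) hgcd
  obtain ⟨h, hmonic, hhdeg, hchar⟩ :=
    exists_genpoly (L := L) q r δ hq hr hδ hδr hqr α₂ hα₂ b D hD hDq
  obtain ⟨eC⟩ := equiv_Ccyc r δ hδ hδr α₂ D h hmonic hhdeg hchar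
  haveI : Module.Finite F (Polynomial.degreeLT F (r - (δ - 1))) :=
    Module.Finite.equiv (Polynomial.degreeLTEquiv F (r - (δ - 1))).symm
  haveI : Module.Finite F (Ccyc F r α₂ D) := Module.Finite.equiv eC
  have hrankC : Module.finrank F (Ccyc F r α₂ D) = r - (δ - 1) := by
    rw [← eC.finrank_eq, (Polynomial.degreeLTEquiv F (r - (δ - 1))).finrank_eq,
      Module.finrank_fin_fun]
  -- the equivalence between (Fin n → Ccyc) and Cn
  let base : (Fin n → Ccyc F r α₂ D) →ₗ[F] MvPolynomial (Fin 2) F :=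
    (Emap n).comp (LinearMap.pi (fun i => (Ccyc F r α₂ D).subtype.comp (LinearMap.proj i)))
  have hbase_mem : ∀ f : Fin n → Ccyc F r α₂ D, base f ∈ Cn := by
    intro f
    have : base f ∈ abCode F n r α₁ α₂ D := hEmap_mem _ (fun i => (f i).2)
    rw [← hCn] at this
    exact this
  let Ψ : (Fin n → Ccyc F r α₂ D) →ₗ[F] Cn := LinearMap.codRestrict Cn base hbase_mem
  have hΨbij : Function.Bijective Ψ := by
    constructor
    · intro f f' hff
      have h1 : base f = base f' := congrArg Subtype.val hff
      have h2 : (fun i => ((f i : Polynomial F))) = (fun i => ((f' i : Polynomial F))) :=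
        Emap_injective n h1
      funext i
      exact Subtype.ext (congrFun h2 i)
    · rintro ⟨g, hgmem⟩
      have hgab : g ∈ abCode F n r α₁ α₂ D := by rw [← hCn]; exact hgmem
      refine ⟨fun i => ⟨decomp r g (i : ℕ), hdecomp_mem g hgab i⟩, ?_⟩
      apply Subtype.ext
      exact Emap_decomp hgab.1
  have hrankCn : Module.finrank F Cn = n * (r - (δ - 1)) := by
    rw [← (LinearEquiv.ofBijective Ψ hΨbij).finrank_eq]
    rw [Module.finrank_pi_fintype]
    simp [hrankC]
  have hdim : Module.finrank F Cn = n * (r - δ + 1) := by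
    rw [hrankCn]
    congr 1
    omega
  refine ⟨hpart1, hdim, ?_⟩
  -- Part 3 : not MDS
  rw [hdim]
  have hsplit : n * r = n * (r - δ + 1) + n * (δ - 1) := by
    rw [← Nat.mul_add]
    congr 1
    omega
  have hge : 2 * (δ - 1) ≤ n * (δ - 1) := Nat.mul_le_mul_right _ hn
  set A := n * (r - δ + 1)
  set B := n * (δ - 1)
  omega
end
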